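/- arXiv:2109.08009 — 2 statements merged into one kernel-verified Lean document; each statement's English description precedes it below -/
import Mathlib

section
/- (Summed surrogate majorization for the negative Bernoulli log-likelihood.) Let I be a finite index set, q : I → {-1, 1}, and x, x₀ : I → ℝ. Define z₀(i) = x₀(i) + 4·q(i)·(1 - π(q(i)·x₀(i))), where π(u) = exp(u)/(exp(u)+1). Then ∑_{i ∈ I} -log(π(q(i)·x(i))) ≤ ∑_{i ∈ I} [ -log(π(q(i)·x₀(i))) + (1/8)·(x(i) - z₀(i))² ]. -/
/-- The logistic function π(u) = exp(u)/(exp(u)+1). -/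
noncomputable def logistic (x : ℝ) : ℝ := Real.exp x / (Real.exp x + 1)

lemma logistic_pos (x : ℝ) : 0 < logistic x := by
  unfold logistic; positivity

lemma logistic_lt_one (x : ℝ) : logistic x < 1 := by
  unfold logistic
  rw [div_lt_one (by positivity)]
  linarith

lemma hasDerivAt_logistic (x : ℝ) :
    HasDerivAt logistic (logistic x * (1 - logistic x)) x := by
  have h : HasDerivAt (fun x => Real.exp x + 1) (Real.exp x) x :=
    (Real.hasDerivAt_exp x).add_const 1
  have := (Real.hasDerivAt_exp x).div h (by positivity)
  refine this.congr_deriv ?_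
  unfold logistic
  have hx : Real.exp x + 1 ≠ 0 := by positivity
  field_simp

lemma logistic_lipschitz (a b : ℝ) :
    |logistic a - logistic b| ≤ (1/4) * |a - b| := by
  have hdiff : Differentiable ℝ logistic := fun x => (hasDerivAt_logistic x).differentiableAt
  have hL : LipschitzWith (1/4 : NNReal) logistic := by
    apply lipschitzWith_of_nnnorm_deriv_le hdiff
    intro x
    rw [(hasDerivAt_logistic x).deriv, ← NNReal.coe_le_coe, coe_nnnorm]
    have h1 := logistic_pos x
    have h2 := logistic_lt_one x
    rw [Real.norm_eq_abs, abs_le]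
    constructor
    · push_cast; nlinarith [sq_nonneg (logistic x - 1/2)]
    · push_cast; nlinarith [sq_nonneg (logistic x - 1/2)]
  have := hL.dist_le_mul a b
  simpa [Real.dist_eq, NNReal.coe_div] using this

lemma neg_log_logistic (s : ℝ) :
    -Real.log (logistic s) = Real.log (Real.exp s + 1) - s := by
  unfold logistic
  rw [Real.log_div (Real.exp_ne_zero s) (by positivity), Real.log_exp]
  ring

lemma hasDerivAt_F (s : ℝ) :
    HasDerivAt (fun u => Real.log (Real.exp u + 1) - u) (logistic s - 1) s := by
  have h : HasDerivAt (fun u => Real.exp u + 1) (Real.exp s) s :=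
    (Real.hasDerivAt_exp s).add_const 1
  have hlog := h.log (by positivity)
  have := hlog.sub (hasDerivAt_id s)
  refine this.congr_deriv ?_
  simp [logistic]

/-- Pointwise quadratic majorization. -/
lemma pointwise_maj (t s : ℝ) :
    -Real.log (logistic s) ≤ -Real.log (logistic t)
      + (logistic t - 1) * (s - t) + (1/8) * (s - t) ^ 2 := by
  set F : ℝ → ℝ := fun u => Real.log (Real.exp u + 1) - u with hF
  set h : ℝ → ℝ := fun u => F t + (logistic t - 1) * (u - t) + (1/8) * (u - t) ^ 2 - F u with hh
  have hderiv : ∀ u, HasDerivAt h ((1/4) * (u - t) - (logistic u - logistic t)) u := by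
    intro u
    have h1 : HasDerivAt (fun u => F t + (logistic t - 1) * (u - t) + (1/8) * (u - t) ^ 2)
        ((logistic t - 1) + (1/8) * (2 * (u - t))) u := by
      have ha : HasDerivAt (fun u : ℝ => u - t) 1 u := (hasDerivAt_id u).sub_const t
      have hb := ((ha.const_mul (logistic t - 1)).const_add (F t)).add
        ((ha.pow 2).const_mul (1/8))
      refine hb.congr_deriv ?_
      ring
    have := h1.sub (hasDerivAt_F u)
    refine this.congr_deriv ?_
    ring
  have hcont : Continuous h := by
    have : Differentiable ℝ h := fun u => (hderiv u).differentiableAt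
    exact this.continuous
  have hge : ∀ u, 0 ≤ h u := by
    intro u
    have ht0 : h t = 0 := by simp [hh]
    rcases le_total t u with huv | huv
    · have hmono : MonotoneOn h (Set.Ici t) := by
        apply monotoneOn_of_deriv_nonneg (convex_Ici t) hcont.continuousOn
        · intro y hy
          exact (hderiv y).differentiableAt.differentiableWithinAt
        · intro y hy
          rw [(hderiv y).deriv]
          simp only [interior_Ici, Set.mem_Ioi] at hy
          have := logistic_lipschitz y t
          have habs : logistic y - logistic t ≤ (1/4) * (y - t) := by
            have h1 : |logistic y - logistic t| ≤ (1/4) * |y - t| := this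
            rw [abs_of_nonneg (by linarith : (0:ℝ) ≤ y - t)] at h1
            exact le_trans (le_abs_self _) h1
          linarith
      have := hmono (Set.self_mem_Ici) (Set.mem_Ici.mpr huv) huv
      linarith [ht0 ▸ this]
    · have hanti : AntitoneOn h (Set.Iic t) := by
        apply antitoneOn_of_deriv_nonpos (convex_Iic t) hcont.continuousOn
        · intro y hy
          exact (hderiv y).differentiableAt.differentiableWithinAt
        · intro y hy
          rw [(hderiv y).deriv]
          simp only [interior_Iic, Set.mem_Iio] at hy
          have h1 := logistic_lipschitz t y
          have habs : logistic t - logistic y ≤ (1/4) * (t - y) := by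
            rw [abs_of_nonneg (by linarith : (0:ℝ) ≤ t - y)] at h1
            exact le_trans (le_abs_self _) h1
          linarith
      have := hanti (Set.mem_Iic.mpr huv) (Set.self_mem_Iic) huv
      linarith [ht0 ▸ this]
  have := hge s
  rw [hh] at this
  simp only at this
  rw [neg_log_logistic s, neg_log_logistic t]
  rw [hF] at this
  simp only at this
  linarith

/-- Summed surrogate majorization for the negative Bernoulli
log-likelihood. With z₀(i) = x₀(i) + 4q(i)(1 - π(q(i)x₀(i))),
∑ᵢ -log(π(q(i)x(i))) ≤ ∑ᵢ [-log(π(q(i)x₀(i))) + (1/8)(x(i) - z₀(i))²]. -/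
theorem summed_surrogate_majorization {I : Type*} [Fintype I]
    (q x x₀ : I → ℝ) (hq : ∀ i, q i = -1 ∨ q i = 1)
    (z₀ : I → ℝ)
    (hz₀ : ∀ i, z₀ i = x₀ i + 4 * q i * (1 - logistic (q i * x₀ i))) :
    ∑ i, -Real.log (logistic (q i * x i)) ≤
      ∑ i, (-Real.log (logistic (q i * x₀ i))
              + (1 / 8) * (x i - z₀ i) ^ 2) := by
  apply Finset.sum_le_sum
  intro i _
  have hq2 : q i * q i = 1 := by rcases hq i with h | h <;> rw [h] <;> ring
  have hkey := pointwise_maj (q i * x₀ i) (q i * x i)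
  have hz := hz₀ i
  set p := logistic (q i * x₀ i)
  -- (logistic t - 1)(s - t) + (1/8)(s-t)^2 ≤ (1/8)(x i - z₀ i)^2
  have : (p - 1) * (q i * x i - q i * x₀ i) + (1/8) * (q i * x i - q i * x₀ i) ^ 2
      ≤ (1/8) * (x i - z₀ i) ^ 2 := by
    rw [hz]
    nlinarith [sq_nonneg (1 - p), hq2, sq_nonneg (x i - x₀ i)]
  linarith
end

section
/- (MM descent property of the surrogate.) Let I be a finite index set, q : I → {-1, 1}, and x, x₀ : I → ℝ. Define z₀(i) = x₀(i) + 4·q(i)·(1 - π(q(i)·x₀(i))), where π(u) = exp(u)/(exp(u)+1). If ∑_{i ∈ I} (x(i) - z₀(i))² ≤ ∑_{i ∈ I} (x₀(i) - z₀(i))², then ∑_{i ∈ I} -log(π(q(i)·x(i))) ≤ ∑_{i ∈ I} -log(π(q(i)·x₀(i))). That is, any update that decreases the surrogate least-squares criterion decreases the negative Bernoulli log-likelihood. -/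
lemma exp_add_one_pos (t : ℝ) : (0:ℝ) < Real.exp t + 1 := by positivity

lemma hasDerivAt_logexp (t : ℝ) :
    HasDerivAt (fun s => Real.log (Real.exp s + 1)) (logistic t) t := by
  have h : HasDerivAt (fun s => Real.exp s + 1) (Real.exp t) t :=
    (Real.hasDerivAt_exp t).add_const 1
  have := (h.log (exp_add_one_pos t).ne')
  simpa [logistic] using this

lemma hasDerivAt_g (t : ℝ) :
    HasDerivAt (fun s : ℝ => s ^ 2 / 8 + s - Real.log (Real.exp s + 1))
      (t / 4 + 1 - logistic t) t := by
  have h1 : HasDerivAt (fun s : ℝ => s ^ 2 / 8 + s) (t / 4 + 1) t := by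
    have := ((hasDerivAt_pow 2 t).div_const 8).add (hasDerivAt_id t)
    exact this.congr_deriv (by ring)
  exact h1.sub (hasDerivAt_logexp t)

lemma hasDerivAt_phi (t : ℝ) :
    HasDerivAt (fun s : ℝ => s / 4 + 1 - logistic s)
      (1 / 4 - Real.exp t / (Real.exp t + 1) ^ 2) t := by
  have hden : (Real.exp t + 1) ≠ 0 := (exp_add_one_pos t).ne'
  have hl : HasDerivAt logistic (Real.exp t / (Real.exp t + 1) ^ 2) t := by
    have := (Real.hasDerivAt_exp t).div ((Real.hasDerivAt_exp t).add_const 1) hden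
    have h2 : (Real.exp t * (Real.exp t + 1) - Real.exp t * Real.exp t) / (Real.exp t + 1) ^ 2
        = Real.exp t / (Real.exp t + 1) ^ 2 := by
      field_simp; ring
    rw [h2] at this; exact this
  have := ((hasDerivAt_id t).div_const 4).add_const 1 |>.sub hl
  exact this

lemma g_convex : ConvexOn ℝ Set.univ
    (fun s : ℝ => s ^ 2 / 8 + s - Real.log (Real.exp s + 1)) := by
  have hdiff : Differentiable ℝ (fun s : ℝ => s ^ 2 / 8 + s - Real.log (Real.exp s + 1)) :=
    fun t => (hasDerivAt_g t).differentiableAt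
  have hderiv : deriv (fun s : ℝ => s ^ 2 / 8 + s - Real.log (Real.exp s + 1))
      = fun t => t / 4 + 1 - logistic t := funext fun t => (hasDerivAt_g t).deriv
  refine Monotone.convexOn_univ_of_deriv hdiff ?_
  rw [hderiv]
  refine monotone_of_deriv_nonneg (fun t => (hasDerivAt_phi t).differentiableAt) fun t => ?_
  rw [(hasDerivAt_phi t).deriv]
  have h := exp_add_one_pos t
  rw [sub_nonneg, div_le_div_iff₀ (by positivity) (by norm_num : (0:ℝ) < 4)]
  nlinarith [sq_nonneg (Real.exp t - 1)]

/-- Tangent-line (majorization) inequality for the convex function g. -/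
lemma tangent_ineq (a b : ℝ) :
    (fun s : ℝ => s ^ 2 / 8 + s - Real.log (Real.exp s + 1)) a
      + (a / 4 + 1 - logistic a) * (b - a)
      ≤ (fun s : ℝ => s ^ 2 / 8 + s - Real.log (Real.exp s + 1)) b := by
  set g := fun s : ℝ => s ^ 2 / 8 + s - Real.log (Real.exp s + 1)
  rcases lt_trichotomy a b with h | h | h
  · have := g_convex.le_slope_of_hasDerivAt (Set.mem_univ a) (Set.mem_univ b) h
      (hasDerivAt_g a)
    rw [slope_def_field] at this
    have hba : (0:ℝ) < b - a := by linarith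
    rw [le_div_iff₀ hba] at this
    simp only [g]
    nlinarith
  · simp [h]
  · have := g_convex.slope_le_of_hasDerivAt (Set.mem_univ b) (Set.mem_univ a) h
      (hasDerivAt_g a)
    rw [slope_def_field] at this
    have hab : (0:ℝ) < a - b := by linarith
    rw [div_le_iff₀ hab] at this
    simp only [g]
    nlinarith

/-- Quadratic majorization of the negative log-logistic loss. -/
lemma key_ineq (a b : ℝ) :
    -Real.log (logistic b) ≤ -Real.log (logistic a)
      + (logistic a - 1) * (b - a) + (b - a) ^ 2 / 8 := by
  have hF : ∀ t : ℝ, -Real.log (logistic t) = Real.log (Real.exp t + 1) - t := by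
    intro t
    rw [logistic, Real.log_div (Real.exp_pos t).ne' (exp_add_one_pos t).ne', Real.log_exp]
    ring
  have h := tangent_ineq a b
  simp only at h
  rw [hF a, hF b]
  nlinarith

/-- MM descent property of the surrogate. With
z₀(i) = x₀(i) + 4q(i)(1 - π(q(i)x₀(i))), any update x that decreases the
surrogate least-squares criterion ∑ᵢ (x(i) - z₀(i))² below ∑ᵢ (x₀(i) - z₀(i))²
also decreases the negative Bernoulli log-likelihood. -/
theorem mm_descent_property {I : Type*} [Fintype I]
    (q x x₀ : I → ℝ) (hq : ∀ i, q i = -1 ∨ q i = 1)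
    (z₀ : I → ℝ)
    (hz₀ : ∀ i, z₀ i = x₀ i + 4 * q i * (1 - logistic (q i * x₀ i)))
    (hdec : ∑ i, (x i - z₀ i) ^ 2 ≤ ∑ i, (x₀ i - z₀ i) ^ 2) :
    ∑ i, -Real.log (logistic (q i * x i)) ≤
      ∑ i, -Real.log (logistic (q i * x₀ i)) := by
  have key : ∀ i, -Real.log (logistic (q i * x i)) ≤ -Real.log (logistic (q i * x₀ i))
      + (1 / 8) * ((x i - z₀ i) ^ 2 - (x₀ i - z₀ i) ^ 2) := by
    intro i
    have hq2 : q i * q i = 1 := by rcases hq i with h | h <;> rw [h] <;> ring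
    have h := key_ineq (q i * x₀ i) (q i * x i)
    have heq : (logistic (q i * x₀ i) - 1) * (q i * x i - q i * x₀ i)
        + (q i * x i - q i * x₀ i) ^ 2 / 8
        = (1 / 8) * ((x i - z₀ i) ^ 2 - (x₀ i - z₀ i) ^ 2) := by
      rcases hq i with hqi | hqi <;> rw [hz₀ i, hqi] <;> ring
    linarith [h, heq.le, heq.ge]
  calc ∑ i, -Real.log (logistic (q i * x i))
      ≤ ∑ i, (-Real.log (logistic (q i * x₀ i))
          + (1 / 8) * ((x i - z₀ i) ^ 2 - (x₀ i - z₀ i) ^ 2)) :=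
        Finset.sum_le_sum fun i _ => key i
    _ = ∑ i, -Real.log (logistic (q i * x₀ i))
          + (1 / 8) * (∑ i, (x i - z₀ i) ^ 2 - ∑ i, (x₀ i - z₀ i) ^ 2) := by
        rw [Finset.sum_add_distrib, ← Finset.mul_sum, Finset.sum_sub_distrib]
    _ ≤ ∑ i, -Real.log (logistic (q i * x₀ i)) := by nlinarith
end
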